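/- Let A and B be N×N complex Hermitian matrices, set H = A + B, let n ≥ 1 be a natural number, t > 0, Δt = t/n, and let ‖·‖ denote the spectral norm. Then ‖e^{−iHt} − (e^{−iAΔt/2}·e^{−iBΔt}·e^{−iAΔt/2})^n‖ ≤ (1/12)·(‖[[A,B],A]‖ + ‖[[A,B],B]‖)·t·Δt² ≤ (2/3)·‖A‖·‖B‖·max{‖A‖,‖B‖}·t·Δt², where [X,Y] = XY − YX denotes the matrix commutator. -/

import Mathlib

open scoped Matrix.Norms.L2Operator

noncomputable instance instNormedAlgebraRatMatrixL2 {N : ℕ} : NormedAlgebra ℚ (Matrix (Fin N) (Fin N) ℂ) where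
  norm_smul_le q x := by
    rw [← Rat.cast_smul_eq_qsmul ℂ q x, norm_smul]
    apply le_of_eq
    congr 1
    rw [← Rat.norm_cast_real, ← Complex.norm_real, Complex.ofReal_ratCast]

namespace StrangAux
variable {N : ℕ}
local notation "M" => Matrix (Fin N) (Fin N) ℂ
noncomputable def e (X : M) (u : ℝ) : M := NormedSpace.exp (u • X)
lemma e_add (X : M) (a b : ℝ) : e X a * e X b = e X (a + b) := by
  rw [e, e, e, add_smul, NormedSpace.exp_add_of_commute (((Commute.refl X).smul_left a).smul_right b)]
lemma e_zero (X : M) : e X 0 = 1 := by rw [e, zero_smul, NormedSpace.exp_zero]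
lemma e_neg (X : M) (u : ℝ) : e (-X) u = e X (-u) := by rw [e, e, smul_neg, ← neg_smul]
lemma e_cancel (X : M) (u : ℝ) : e X u * e X (-u) = 1 := by rw [e_add, add_neg_cancel, e_zero]
lemma cont_e (X : M) : Continuous (e X) := NormedSpace.exp_continuous.comp (continuous_id.smul continuous_const)
lemma he (X : M) (u : ℝ) : HasDerivAt (e X) (e X u * X) u := hasDerivAt_exp_smul_const (𝕂 := ℝ) X u
lemma he' (X : M) (u : ℝ) : HasDerivAt (e X) (X * e X u) u := hasDerivAt_exp_smul_const' (𝕂 := ℝ) X u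
lemma e_star {X : M} (hX : star X = -X) (u : ℝ) : star (e X u) = e X (-u) := by
  rw [e, NormedSpace.star_exp, star_smul, star_trivial, hX, smul_neg, ← neg_smul, e]
lemma comm_e (X : M) (u : ℝ) : X * e X u = e X u * X := (((Commute.refl X).smul_right u).exp_right)
lemma norm_unit_mul (u a : M) (h : star u * u = 1) : ‖u * a‖ = ‖a‖ := by
  have h1 : star (u * a) * (u * a) = star a * a := by
    rw [star_mul, mul_assoc, ← mul_assoc (star u), h, one_mul]
  have h2 := CStarRing.norm_star_mul_self (x := u * a)
  rw [h1, CStarRing.norm_star_mul_self] at h2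
  have := norm_nonneg (u * a); have := norm_nonneg a
  nlinarith [h2]
lemma norm_mul_unit (u a : M) (h : u * star u = 1) : ‖a * u‖ = ‖a‖ := by
  have h1 : (a * u) * star (a * u) = a * star a := by
    rw [star_mul, mul_assoc, ← mul_assoc u, h, one_mul]
  have h2 := CStarRing.norm_self_mul_star (x := a * u)
  rw [h1, CStarRing.norm_self_mul_star] at h2
  have := norm_nonneg (a * u); have := norm_nonneg a
  nlinarith [h2]

-- NEW PART
lemma e_unit_l {X : M} (hX : star X = -X) (u : ℝ) : star (e X u) * e X u = 1 := by
  rw [e_star hX]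
  rw [show e X (-u) * e X u = 1 by rw [e_add, neg_add_cancel, e_zero]]

lemma e_unit_r {X : M} (hX : star X = -X) (u : ℝ) : e X u * star (e X u) = 1 := by
  rw [e_star hX, e_cancel]

/-- conjugation by exponentials -/
noncomputable def cnj (X Z : M) (u : ℝ) : M := e X u * Z * e X (-u)

lemma cnj_zero (X Z : M) : cnj X Z 0 = Z := by simp [cnj, e_zero, neg_zero]

lemma cont_cnj (X Z : M) : Continuous (cnj X Z) :=
  (((cont_e X).mul continuous_const).mul ((cont_e X).comp continuous_neg))

lemma norm_cnj {X : M} (hX : star X = -X) (Z : M) (u : ℝ) : ‖cnj X Z u‖ = ‖Z‖ := by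
  rw [cnj, norm_mul_unit _ _ (e_unit_r hX (-u)), norm_unit_mul _ _ (e_unit_l hX u)]

lemma hasDerivAt_cnj (X Z : M) (u : ℝ) :
    HasDerivAt (cnj X Z) (cnj X (X * Z - Z * X) u) u := by
  have h1 : HasDerivAt (fun v : ℝ => e X v * Z) (e X u * X * Z) u := (he X u).mul_const Z
  have h2 : HasDerivAt (fun v : ℝ => e X (-v)) (-X * e X (-u)) u := by
    have hfun : e (-X) = fun v : ℝ => e X (-v) := funext (e_neg X)
    simpa [hfun] using he' (-X) u
  have h3 := h1.mul h2
  refine h3.congr_deriv ?_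
  simp only [cnj]
  noncomm_ring

/-- Mean value bound -/
lemma mvt {f f' : ℝ → M} {K a b : ℝ} (hab : a ≤ b)
    (hd : ∀ x ∈ Set.Icc a b, HasDerivAt f (f' x) x)
    (hK : ∀ x ∈ Set.Icc a b, ‖f' x‖ ≤ K) : ‖f b - f a‖ ≤ K * (b - a) := by
  have := Convex.norm_image_sub_le_of_norm_hasDerivWithin_le
    (fun x hx => (hd x hx).hasDerivWithinAt) hK (convex_Icc a b)
    (Set.left_mem_Icc.2 hab) (Set.right_mem_Icc.2 hab)
  rwa [Real.norm_eq_abs, abs_of_nonneg (sub_nonneg.2 hab)] at this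

lemma ad_lip {X : M} (hX : star X = -X) (Z : M) {a b : ℝ} (hab : a ≤ b) :
    ‖cnj X Z b - cnj X Z a‖ ≤ (b - a) * ‖X * Z - Z * X‖ := by
  rw [mul_comm]
  exact mvt hab (fun x _ => hasDerivAt_cnj X Z x)
    (fun x _ => le_of_eq (norm_cnj hX (X * Z - Z * X) x))


lemma key_alg (X Y a b a' b' : M) (ha'a : a' * a = 1) (hbb : b * b' = 1) (hb'b : b' * b = 1)
    (hXa : X * a = a * X) (hYb : Y * b = b * Y) :
    ((a*X)*b + a*(b*Y))*a + (a*b)*(a*X) - (X + (Y+X))*((a*b)*a)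
      = (a*Y*a' - Y)*((a*b)*a) - a*b*((b'*X*b - X)*a) := by
  have r1 : ∀ w : M, X * (a * w) = a * (X * w) := fun w => by rw [← mul_assoc, hXa, mul_assoc]
  have r2 : ∀ w : M, Y * (b * w) = b * (Y * w) := fun w => by rw [← mul_assoc, hYb, mul_assoc]
  have r3 : ∀ w : M, a' * (a * w) = w := fun w => by rw [← mul_assoc, ha'a, one_mul]
  have r4 : ∀ w : M, b' * (b * w) = w := fun w => by rw [← mul_assoc, hb'b, one_mul]
  have r5 : ∀ w : M, b * (b' * w) = w := fun w => by rw [← mul_assoc, hbb, one_mul]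
  simp only [sub_mul, mul_sub, add_mul, mul_add, mul_assoc, r1, r2, r3, r4, r5, hXa, hYb]
  abel

lemma triple_cancel (p q r p' q' r' : M) (hp : p * p' = 1) (hq : q * q' = 1) (hr : r * r' = 1) :
    (p * q * r) * (r' * (q' * p')) = 1 := by
  have h1 : r * (r' * (q' * p')) = q' * p' := by rw [← mul_assoc, hr, one_mul]
  rw [mul_assoc (p*q), h1, mul_assoc, ← mul_assoc q, hq, one_mul, hp]

set_option maxHeartbeats 1000000 in
theorem step_bound (X Y : M) (hX : star X = -X) (hY : star Y = -Y) {Δ : ℝ} (hΔ : 0 ≤ Δ) :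
    ‖e (X + (Y + X)) Δ - e X Δ * e Y Δ * e X Δ‖ ≤
      Δ^3 / 6 * (‖X*(X*Y-Y*X) - (X*Y-Y*X)*X‖ + ‖Y*(X*Y-Y*X) - (X*Y-Y*X)*Y‖) := by
  set C : M := X*Y - Y*X with hC
  set K : ℝ := ‖X*C - C*X‖ + ‖Y*C - C*Y‖ with hK
  have hK0 : 0 ≤ K := add_nonneg (norm_nonneg _) (norm_nonneg _)
  set L : M := X + (Y + X) with hL
  have hLs : star L = -L := by rw [hL]; simp only [star_add, hX, hY]; abel
  set S : ℝ → M := fun s => e X s * e Y s * e X s with hS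
  have hScont : Continuous S := ((cont_e X).mul (cont_e Y)).mul (cont_e X)
  have hSr : ∀ s, S s * star (S s) = 1 := by
    intro s
    simp only [hS, star_mul, e_star hX, e_star hY]
    exact triple_cancel _ _ _ _ _ _ (e_cancel X s) (e_cancel Y s) (e_cancel X s)
  set D : ℝ → M := fun s => (cnj X Y s - Y) * S s - e X s * e Y s * ((cnj (-Y) X s - X) * e X s)
    with hD
  have hDcont : Continuous D := by
    apply Continuous.sub
    · exact ((cont_cnj X Y).sub continuous_const).mul hScont
    · exact ((cont_e X).mul (cont_e Y)).mul
        (((cont_cnj (-Y) X).sub continuous_const).mul (cont_e X))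
  -- derivative of F s = e L (Δ - s) * S s
  have hF : ∀ s : ℝ, HasDerivAt (fun v => e L (Δ - v) * S v) (e L (Δ - s) * D s) s := by
    intro s
    have hE : HasDerivAt (fun v : ℝ => e L (Δ - v)) (-(e L (Δ - s) * L)) s := by
      have h1 := he L (Δ - s)
      have h2 : HasDerivAt (fun v : ℝ => Δ - v) (-1) s := (hasDerivAt_id s).const_sub Δ
      have h3 := h1.scomp s h2
      simp only [neg_smul, one_smul] at h3
      exact h3
    have hS' : HasDerivAt S (((e X s * X) * e Y s + e X s * (e Y s * Y)) * e X s
        + (e X s * e Y s) * (e X s * X)) s := ((he X s).mul (he Y s)).mul (he X s)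
    have h3 := hE.mul hS'
    have hkey := key_alg X Y (e X s) (e Y s) (e X (-s)) (e Y (-s))
      (by rw [e_add, neg_add_cancel, e_zero]) (e_cancel Y s)
      (by rw [e_add, neg_add_cancel, e_zero]) (comm_e X s) (comm_e Y s)
    have hD2 : D s = ((e X s * X) * e Y s + e X s * (e Y s * Y)) * e X s
        + (e X s * e Y s) * (e X s * X) - L * ((e X s * e Y s) * e X s) := by
      show (cnj X Y s - Y) * S s - e X s * e Y s * ((cnj (-Y) X s - X) * e X s) = _
      simp only [hS, cnj, e_neg, neg_neg, hL]
      rw [← hkey]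
    have h4 : -(e L (Δ - s) * L) * S s + e L (Δ - s) * (((e X s * X) * e Y s
        + e X s * (e Y s * Y)) * e X s + (e X s * e Y s) * (e X s * X))
        = e L (Δ - s) * D s := by
      rw [hD2]; simp only [hS]; noncomm_ring
    rw [← h4]
    exact h3

  -- inner bound
  have hDle : ∀ s : ℝ, 0 ≤ s → ‖D s‖ ≤ s^2/2*K := by
    intro s hs
    have hint1 : IntervalIntegrable (cnj X C) MeasureTheory.volume 0 s :=
      (cont_cnj X C).intervalIntegrable 0 s
    have hint2 : IntervalIntegrable (cnj (-Y) C) MeasureTheory.volume 0 s :=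
      (cont_cnj (-Y) C).intervalIntegrable 0 s
    have i1 : ∫ u in (0:ℝ)..s, cnj X C u = cnj X Y s - Y := by
      have h6 := intervalIntegral.integral_eq_sub_of_hasDerivAt
        (f := cnj X Y) (f' := cnj X C) (a := 0) (b := s)
        (fun u _ => by simpa [← hC] using hasDerivAt_cnj X Y u) hint1
      rwa [cnj_zero] at h6
    have i2 : ∫ u in (0:ℝ)..s, cnj (-Y) C u = cnj (-Y) X s - X := by
      have h5 : (-Y) * X - X * (-Y) = C := by rw [hC]; noncomm_ring
      have h6 := intervalIntegral.integral_eq_sub_of_hasDerivAt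
        (f := cnj (-Y) X) (f' := cnj (-Y) C) (a := 0) (b := s)
        (fun u _ => by have h8 := hasDerivAt_cnj (-Y) X u; rwa [h5] at h8) hint2
      rwa [cnj_zero] at h6
    have j1 : (cnj X Y s - Y) * S s = ∫ u in (0:ℝ)..s, cnj X C u * S s := by
      have hcc := ((ContinuousLinearMap.mul ℝ (Matrix (Fin N) (Fin N) ℂ)).flip
        (S s)).intervalIntegral_comp_comm hint1
      simp only [ContinuousLinearMap.flip_apply, ContinuousLinearMap.mul_apply'] at hcc
      rw [← i1]; exact hcc.symm
    have j2 : e X s * e Y s * ((cnj (-Y) X s - X) * e X s)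
        = ∫ u in (0:ℝ)..s, e X s * e Y s * (cnj (-Y) C u * e X s) := by
      have hcc := ((ContinuousLinearMap.mul ℝ (Matrix (Fin N) (Fin N) ℂ) (e X s * e Y s)).comp
        ((ContinuousLinearMap.mul ℝ (Matrix (Fin N) (Fin N) ℂ)).flip
          (e X s))).intervalIntegral_comp_comm hint2
      simp only [ContinuousLinearMap.coe_comp', Function.comp_apply,
        ContinuousLinearMap.flip_apply, ContinuousLinearMap.mul_apply'] at hcc
      rw [← i2]; exact hcc.symm
    have hDrep : D s = ∫ u in (0:ℝ)..s,
        (cnj X C u * S s - e X s * e Y s * (cnj (-Y) C u * e X s)) := by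
      rw [intervalIntegral.integral_sub (f := fun u => cnj X C u * S s)
        (g := fun u => e X s * e Y s * (cnj (-Y) C u * e X s))
        (((cont_cnj X C).mul continuous_const).intervalIntegrable 0 s)
        ((continuous_const.mul ((cont_cnj (-Y) C).mul continuous_const)).intervalIntegrable 0 s),
        ← j1, ← j2]
    have hmerge : ∀ (Z : M) (a b : ℝ) (w : M), e Z a * (e Z b * w) = e Z (a+b) * w :=
      fun Z a b w => by rw [← mul_assoc, e_add]
    have hGle : ∀ u : ℝ, 0 ≤ u → u ≤ s →
        ‖cnj X C u * S s - e X s * e Y s * (cnj (-Y) C u * e X s)‖ ≤ (s-u)*K := by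
      intro u hu0 hus
      have claim2 : e X s * e Y s * (cnj (-Y) C u * e X s)
          = (e X s * cnj Y C (s-u) * e X (-s)) * S s := by
        simp only [hS, cnj, e_neg, neg_neg, mul_assoc, hmerge, e_add]
        ring_nf
        simp only [e_zero, one_mul, mul_assoc, hmerge, e_add]
        ring_nf
      rw [claim2, ← sub_mul, norm_mul_unit _ _ (hSr s)]
      have tri : ‖cnj X C u - e X s * cnj Y C (s-u) * e X (-s)‖
          ≤ ‖cnj X C u - cnj X C s‖ + ‖cnj X C s - e X s * cnj Y C (s-u) * e X (-s)‖ :=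
        norm_sub_le_norm_sub_add_norm_sub _ _ _
      have b1 : ‖cnj X C u - cnj X C s‖ ≤ (s-u) * ‖X*C - C*X‖ := by
        rw [norm_sub_rev]; exact ad_lip hX C hus
      have b2 : ‖cnj X C s - e X s * cnj Y C (s-u) * e X (-s)‖ ≤ (s-u) * ‖Y*C - C*Y‖ := by
        have hfac : cnj X C s - e X s * cnj Y C (s-u) * e X (-s)
            = e X s * ((C - cnj Y C (s-u)) * e X (-s)) := by
          simp only [cnj]; noncomm_ring
        rw [hfac, norm_unit_mul _ _ (e_unit_l hX s), norm_mul_unit _ _ (e_unit_r hX (-s))]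
        have := ad_lip hY C (sub_nonneg.2 hus)
        rw [cnj_zero, sub_zero] at this
        rwa [norm_sub_rev]
      calc ‖cnj X C u - e X s * cnj Y C (s-u) * e X (-s)‖
          ≤ (s-u) * ‖X*C - C*X‖ + (s-u) * ‖Y*C - C*Y‖ := le_trans tri (add_le_add b1 b2)
        _ = (s-u)*K := by rw [hK]; ring
    rw [hDrep]
    have hbint : IntervalIntegrable (fun u : ℝ => (s-u)*K) MeasureTheory.volume 0 s :=
      ((continuous_const.sub continuous_id).mul continuous_const).intervalIntegrable 0 s
    have := intervalIntegral.norm_integral_le_of_norm_le (μ := MeasureTheory.volume)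
      (f := fun u => cnj X C u * S s - e X s * e Y s * (cnj (-Y) C u * e X s))
      (g := fun u => (s-u)*K) (a := 0) (b := s) hs
      (Filter.Eventually.of_forall (fun u hu => by
          exact hGle u hu.1.le hu.2)) hbint
    refine le_trans this (le_of_eq ?_)
    have hval : ∫ u in (0:ℝ)..s, (s-u)*K = s^2/2*K := by
      rw [intervalIntegral.integral_mul_const]
      have h9 : ∫ u in (0:ℝ)..s, (s - u) = s^2/2 := by
        rw [intervalIntegral.integral_comp_sub_left (fun x : ℝ => x) s]
        rw [integral_id]
        ring
      rw [h9]
    rw [hval]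
  -- outer integral representation
  have houter : S Δ - e L Δ = ∫ s in (0:ℝ)..Δ, e L (Δ - s) * D s := by
    have hcont : Continuous fun s : ℝ => e L (Δ - s) * D s :=
      ((cont_e L).comp (continuous_const.sub continuous_id)).mul hDcont
    have h7 := intervalIntegral.integral_eq_sub_of_hasDerivAt
      (f := fun v => e L (Δ - v) * S v) (fun s _ => hF s) (hcont.intervalIntegrable 0 Δ)
    rw [h7]
    simp only [hS, sub_self, sub_zero, e_zero, one_mul, mul_one]
  show ‖e L Δ - S Δ‖ ≤ Δ^3/6*K
  rw [norm_sub_rev, houter]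
  have hbint2 : IntervalIntegrable (fun s : ℝ => s^2/2*K) MeasureTheory.volume 0 Δ :=
    (((continuous_pow 2).div_const 2).mul continuous_const).intervalIntegrable 0 Δ
  have hmain := intervalIntegral.norm_integral_le_of_norm_le (μ := MeasureTheory.volume)
    (f := fun s => e L (Δ - s) * D s) (g := fun s => s^2/2*K) (a := 0) (b := Δ) hΔ
    (Filter.Eventually.of_forall (fun s hsm => by
        rw [norm_unit_mul _ _ (e_unit_l hLs (Δ - s))]
        exact hDle s hsm.1.le)) hbint2
  refine le_trans hmain (le_of_eq ?_)
  have hval2 : ∫ s in (0:ℝ)..Δ, s^2/2*K = Δ^3/6*K := by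
    have hfe : (fun s : ℝ => s^2/2*K) = fun s : ℝ => s^2*(K/2) := funext fun s => by ring
    rw [hfe, intervalIntegral.integral_mul_const, integral_pow]
    ring
  rw [hval2]



lemma unit_pow_l (a : M) (ha : star a * a = 1) : ∀ m : ℕ, star (a^m) * a^m = 1
  | 0 => by simp
  | m+1 => by
    rw [pow_succ, star_mul, mul_assoc, ← mul_assoc (star (a^m)), unit_pow_l a ha m, one_mul, ha]

lemma unit_pow_r (b : M) (hb : b * star b = 1) : ∀ m : ℕ, b^m * star (b^m) = 1
  | 0 => by simp
  | m+1 => by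
    rw [pow_succ', star_mul, mul_assoc, ← mul_assoc (b^m), unit_pow_r b hb m, one_mul, hb]

lemma tele (a b : M) (ha : star a * a = 1) (hb : b * star b = 1) :
    ∀ m : ℕ, ‖a^m - b^m‖ ≤ m * ‖a - b‖
  | 0 => by simp
  | m+1 => by
    have hid : a^(m+1) - b^(m+1) = a^m * (a - b) + (a^m - b^m) * b := by
      rw [pow_succ, pow_succ]; noncomm_ring
    calc ‖a^(m+1) - b^(m+1)‖ ≤ ‖a^m * (a - b)‖ + ‖(a^m - b^m) * b‖ := by
          rw [hid]; exact norm_add_le _ _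
      _ = ‖a - b‖ + ‖a^m - b^m‖ := by
          rw [norm_unit_mul _ _ (unit_pow_l a ha m), norm_mul_unit _ _ hb]
      _ ≤ ‖a - b‖ + m * ‖a - b‖ := by have := tele a b ha hb m; linarith
      _ = (↑(m+1) : ℝ) * ‖a - b‖ := by push_cast; ring

end StrangAux


open StrangAux in
set_option maxHeartbeats 1000000 in
/-- Error bound for the repeated Strang (second-order symmetric Trotter) splitting formula
`S₂(A,B,Δt) = e^{−iAΔt/2}·e^{−iBΔt}·e^{−iAΔt/2}` over `n` time slices `Δt = t/n`,
for simulating `e^{−iHt}` with `H = A + B`.  `‖·‖` is the spectral norm. -/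
theorem stmt9 (N : ℕ) (A B : Matrix (Fin N) (Fin N) ℂ)
    (hA : A.IsHermitian) (hB : B.IsHermitian)
    (n : ℕ) (hn : 1 ≤ n) (t : ℝ) (ht : 0 < t) :
    ‖NormedSpace.exp ((-(Complex.I * (t:ℂ))) • (A + B)) -
        (NormedSpace.exp ((-(Complex.I * ((t/n/2 : ℝ) : ℂ))) • A) *
         NormedSpace.exp ((-(Complex.I * ((t/n : ℝ) : ℂ))) • B) *
         NormedSpace.exp ((-(Complex.I * ((t/n/2 : ℝ) : ℂ))) • A)) ^ n‖
      ≤ (1/12) * (‖(A*B - B*A)*A - A*(A*B - B*A)‖ + ‖(A*B - B*A)*B - B*(A*B - B*A)‖)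
          * t * (t/n)^2 ∧
    (1/12) * (‖(A*B - B*A)*A - A*(A*B - B*A)‖ + ‖(A*B - B*A)*B - B*(A*B - B*A)‖)
        * t * (t/n)^2
      ≤ (2/3) * ‖A‖ * ‖B‖ * max ‖A‖ ‖B‖ * t * (t/n)^2 := by
  have hn0 : (n:ℝ) ≠ 0 := Nat.cast_ne_zero.2 (by omega)
  set Δ : ℝ := t / n with hΔdef
  have hΔ0 : 0 ≤ Δ := by positivity
  set X : Matrix (Fin N) (Fin N) ℂ := (-(Complex.I/2)) • A with hXdef
  set Y : Matrix (Fin N) (Fin N) ℂ := (-Complex.I) • B with hYdef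
  have hXs : star X = -X := by
    rw [hXdef, star_smul, Matrix.star_eq_conjTranspose, hA.eq, ← neg_smul]
    congr 1
    simp [Complex.ext_iff]
    norm_num
  have hYs : star Y = -Y := by
    rw [hYdef, star_smul, Matrix.star_eq_conjTranspose, hB.eq, ← neg_smul]
    congr 1
    simp [Complex.ext_iff]
  set L : Matrix (Fin N) (Fin N) ℂ := X + (Y + X) with hLdef
  have hLs : star L = -L := by rw [hLdef]; simp only [star_add, hXs, hYs]; abel
  have hcast : ∀ (r : ℝ) (M₀ : Matrix (Fin N) (Fin N) ℂ), (r:ℂ) • M₀ = r • M₀ := by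
    intro r M₀
    rw [← algebraMap_smul ℂ r M₀, Complex.coe_algebraMap]
  have hU : NormedSpace.exp ((-(Complex.I * (t:ℂ))) • (A + B)) = (e L Δ)^n := by
    have harg : (-(Complex.I * (t:ℂ))) • (A + B) = n • (Δ • L) := by
      rw [← Nat.cast_smul_eq_nsmul ℝ n (Δ • L), smul_smul]
      have hnt : (n:ℝ) * Δ = t := by rw [hΔdef]; field_simp
      rw [hnt, ← hcast t, hLdef, hXdef, hYdef]
      module
    rw [harg, NormedSpace.exp_nsmul]
    congr 1
  have hVA : NormedSpace.exp ((-(Complex.I * ((t/n/2 : ℝ) : ℂ))) • A) = e X Δ := by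
    rw [e]
    congr 1
    rw [← hcast Δ, hXdef, smul_smul, hΔdef]
    push_cast
    congr 1
    ring
  have hVB : NormedSpace.exp ((-(Complex.I * ((t/n : ℝ) : ℂ))) • B) = e Y Δ := by
    rw [e]
    congr 1
    rw [← hcast Δ, hYdef, smul_smul, hΔdef]
    congr 1
    ring
  rw [hU, hVA, hVB]
  set b : Matrix (Fin N) (Fin N) ℂ := e X Δ * e Y Δ * e X Δ with hbdef
  have hb : b * star b = 1 := by
    rw [hbdef]
    simp only [star_mul, e_star hXs, e_star hYs]
    exact triple_cancel _ _ _ _ _ _ (e_cancel X Δ) (e_cancel Y Δ) (e_cancel X Δ)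
  have htel := tele (e L Δ) b (e_unit_l hLs Δ) hb n
  have hstep := step_bound X Y hXs hYs hΔ0
  -- commutator norms
  set Cab : Matrix (Fin N) (Fin N) ℂ := A*B - B*A with hCab
  set CA : ℝ := ‖Cab*A - A*Cab‖ with hCA
  set CB : ℝ := ‖Cab*B - B*Cab‖ with hCB
  have hCA0 : 0 ≤ CA := norm_nonneg _
  have hCB0 : 0 ≤ CB := norm_nonneg _
  have hC' : X*Y - Y*X = (-(1/2 : ℂ)) • Cab := by
    rw [hXdef, hYdef, hCab]
    simp only [smul_mul_assoc, mul_smul_comm, smul_smul]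
    rw [smul_sub]
    congr 2 <;> linear_combination (1/2 : ℂ) * Complex.I_mul_I
  have hn1 : ‖X*(X*Y-Y*X) - (X*Y-Y*X)*X‖ = 1/4 * CA := by
    have hrw : X*(X*Y-Y*X) - (X*Y-Y*X)*X = (-(Complex.I/4)) • (Cab*A - A*Cab) := by
      rw [hC', hXdef]
      simp only [smul_mul_assoc, mul_smul_comm, smul_smul, smul_sub]
      module
    rw [hrw, norm_smul]
    have hns : ‖(-(Complex.I/4) : ℂ)‖ = 1/4 := by simp
    rw [hns, hCA]
  have hn2 : ‖Y*(X*Y-Y*X) - (X*Y-Y*X)*Y‖ = 1/2 * CB := by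
    have hrw : Y*(X*Y-Y*X) - (X*Y-Y*X)*Y = (-(Complex.I/2)) • (Cab*B - B*Cab) := by
      rw [hC', hYdef]
      simp only [smul_mul_assoc, mul_smul_comm, smul_smul, smul_sub]
      module
    rw [hrw, norm_smul]
    have hns : ‖(-(Complex.I/2) : ℂ)‖ = 1/2 := by simp
    rw [hns, hCB]
  rw [hn1, hn2] at hstep
  have hnd : (n:ℝ) * Δ^3 = t * Δ^2 := by
    rw [hΔdef]; field_simp
  constructor
  · calc ‖(e L Δ)^n - b^n‖ ≤ n * ‖e L Δ - b‖ := htel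
      _ ≤ n * (Δ^3/6 * (1/4*CA + 1/2*CB)) := by
          apply mul_le_mul_of_nonneg_left hstep (by positivity)
      _ ≤ (1/12) * (CA + CB) * t * Δ^2 := by nlinarith [mul_nonneg (mul_nonneg ht.le (sq_nonneg Δ)) hCA0]
  · have hAB : ‖Cab‖ ≤ 2 * ‖A‖ * ‖B‖ := by
      calc ‖Cab‖ ≤ ‖A*B‖ + ‖B*A‖ := norm_sub_le _ _
        _ ≤ ‖A‖*‖B‖ + ‖B‖*‖A‖ := add_le_add (norm_mul_le _ _) (norm_mul_le _ _)
        _ = 2 * ‖A‖ * ‖B‖ := by ring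
    set m : ℝ := max ‖A‖ ‖B‖ with hm
    have hA0 : 0 ≤ ‖A‖ := norm_nonneg _
    have hB0 : 0 ≤ ‖B‖ := norm_nonneg _
    have hAm : ‖A‖ ≤ m := le_max_left _ _
    have hBm : ‖B‖ ≤ m := le_max_right _ _
    have hCAb : CA ≤ 4 * ‖A‖ * ‖B‖ * m := by
      calc CA ≤ ‖Cab*A‖ + ‖A*Cab‖ := norm_sub_le _ _
        _ ≤ ‖Cab‖*‖A‖ + ‖A‖*‖Cab‖ := add_le_add (norm_mul_le _ _) (norm_mul_le _ _)
        _ ≤ 2*‖A‖*‖B‖*‖A‖ + ‖A‖*(2*‖A‖*‖B‖) := by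
            have h := mul_le_mul_of_nonneg_right hAB hA0
            have h2 := mul_le_mul_of_nonneg_left hAB hA0
            linarith
        _ ≤ 4 * ‖A‖ * ‖B‖ * m := by
            have hh := mul_le_mul_of_nonneg_left hAm (mul_nonneg hA0 hB0)
            nlinarith [hh]
    have hCBb : CB ≤ 4 * ‖A‖ * ‖B‖ * m := by
      calc CB ≤ ‖Cab*B‖ + ‖B*Cab‖ := norm_sub_le _ _
        _ ≤ ‖Cab‖*‖B‖ + ‖B‖*‖Cab‖ := add_le_add (norm_mul_le _ _) (norm_mul_le _ _)
        _ ≤ 2*‖A‖*‖B‖*‖B‖ + ‖B‖*(2*‖A‖*‖B‖) := by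
            have h := mul_le_mul_of_nonneg_right hAB hB0
            have h2 := mul_le_mul_of_nonneg_left hAB hB0
            linarith
        _ ≤ 4 * ‖A‖ * ‖B‖ * m := by
            have hh := mul_le_mul_of_nonneg_left hBm (mul_nonneg hA0 hB0)
            nlinarith [hh]
    have htd : 0 ≤ t * Δ^2 := mul_nonneg ht.le (sq_nonneg Δ)
    have hsum := add_le_add hCAb hCBb
    nlinarith [mul_le_mul_of_nonneg_right hsum htd]
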